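/- For every integer n with 0 ≤ n ≤ 2δ−3 one has τ(npq) = n(n−2δ+3)/2 and Δ_{npq} = 1. -/

import Mathlib

/-- `Δ_j = 1 + 2j − ⌈jp'/p⌉ − ⌈jq'/q⌉ − ⌈j(pq−2)/(pq−1)⌉`, the increment of the τ-function of
the negative definite Seifert manifold `Σ(−2,(p,p'),(q,q'),(pq−1,pq−2)) = −S³₁(T_{p,q})`. -/
def torusDelta (p q p' q' : ℕ) (j : ℕ) : ℤ :=
  1 + 2 * (j : ℤ) - ⌈((j : ℚ) * (p' : ℚ)) / (p : ℚ)⌉ - ⌈((j : ℚ) * (q' : ℚ)) / (q : ℚ)⌉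
    - ⌈((j : ℚ) * ((p : ℚ) * (q : ℚ) - 2)) / ((p : ℚ) * (q : ℚ) - 1)⌉

/-- `τ(m) = Σ_{j=0}^{m−1} Δ_j`. -/
def torusTau (p q p' q' : ℕ) (m : ℕ) : ℤ := ∑ j ∈ Finset.range m, torusDelta p q p' q' j


section MyHelpers
open Finset


/-- ceil = floor + 1 for non-exact division -/
lemma my_ceil_eq_floor_add_one (s b : ℕ) (hb : 0 < b) (h : ¬ b ∣ s) :
    ⌈(s:ℚ)/(b:ℚ)⌉ = ⌊(s:ℚ)/(b:ℚ)⌋ + 1 := by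
  set x : ℚ := (s:ℚ)/(b:ℚ) with hx
  have hne : x ≠ (⌊x⌋ : ℚ) := by
    intro hxe
    apply h
    have hfl : 0 ≤ ⌊x⌋ := by
      have : (0:ℚ) ≤ x := by positivity
      exact Int.floor_nonneg.mpr this
    have hb0 : (b:ℚ) ≠ 0 := by positivity
    have hsq : (s:ℚ) = (b:ℚ) * (⌊x⌋:ℚ) := by
      rw [hx] at hxe
      field_simp at hxe
      linarith [hxe]
    have hsz : (s:ℤ) = (b:ℤ) * ⌊x⌋ := by exact_mod_cast hsq
    have : (b:ℤ) ∣ (s:ℤ) := ⟨⌊x⌋, hsz⟩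
    exact_mod_cast this
  have h1 : ⌈x⌉ ≤ ⌊x⌋ + 1 := Int.ceil_le_floor_add_one x
  have h2 : (⌊x⌋:ℚ) < x := lt_of_le_of_ne (Int.floor_le x) (Ne.symm hne)
  have h4 : (⌊x⌋:ℚ) < (⌈x⌉:ℚ) := lt_of_lt_of_le h2 (Int.le_ceil x)
  have h5 : ⌊x⌋ < ⌈x⌉ := by exact_mod_cast h4
  omega

/-- generic pairing sum -/
lemma my_sum_pair (f : ℕ → ℤ) (b : ℕ) (hb : 0 < b) (c : ℤ) (h0 : f 0 = 0)
    (hpair : ∀ i, 0 < i → i < b → f i + f (b - i) = c) :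
    2 * ∑ j ∈ range b, f j = ((b:ℤ) - 1) * c := by
  obtain ⟨b', rfl⟩ : ∃ b', b = b' + 1 := ⟨b - 1, by omega⟩
  rw [Finset.sum_range_succ', h0, add_zero]
  have hre : ∑ j ∈ range b', f (b' - 1 - j + 1) = ∑ j ∈ range b', f (j + 1) :=
    Finset.sum_range_reflect (fun j => f (j + 1)) b'
  have key : 2 * ∑ j ∈ range b', f (j + 1)
      = ∑ j ∈ range b', (f (j + 1) + f (b' - 1 - j + 1)) := by
    rw [Finset.sum_add_distrib, hre, two_mul]
  rw [key]
  have : ∀ j ∈ range b', f (j + 1) + f (b' - 1 - j + 1) = c := by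
    intro j hj
    simp only [Finset.mem_range] at hj
    have h1 : b' - 1 - j + 1 = (b' + 1) - (j + 1) := by omega
    rw [h1]
    exact hpair (j + 1) (by omega) (by omega)
  rw [Finset.sum_congr rfl this, Finset.sum_const, Finset.card_range]
  push_cast
  ring

/-- iterate a shift property -/
lemma my_shift_iter (f : ℕ → ℤ) (b : ℕ) (d : ℤ) (hshift : ∀ j, f (j + b) = f j + d)
    (k j : ℕ) : f (j + k * b) = f j + k * d := by
  induction k with
  | zero => simp
  | succ k ih =>
    have : j + (k + 1) * b = (j + k * b) + b := by ring
    rw [this, hshift, ih]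
    push_cast
    ring

/-- generic block sum -/
lemma my_sum_blocks (f : ℕ → ℤ) (b : ℕ) (d C : ℤ) (hshift : ∀ j, f (j + b) = f j + d)
    (hC : 2 * ∑ j ∈ range b, f j = C) (k : ℕ) :
    2 * ∑ j ∈ range (k * b), f j = (k:ℤ) * C + (b:ℤ) * d * k * ((k:ℤ) - 1) := by
  induction k with
  | zero => simp
  | succ k ih =>
    have hsplit : ∑ j ∈ range ((k + 1) * b), f j
        = ∑ j ∈ range (k * b), f j + ∑ i ∈ range b, f (k * b + i) := by
      rw [show (k + 1) * b = k * b + b by ring, Finset.sum_range_add]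
    have hblock : ∀ i, f (k * b + i) = f i + k * d := by
      intro i
      rw [show k * b + i = i + k * b by ring, my_shift_iter f b d hshift k i]
    rw [hsplit, Finset.sum_congr rfl (fun i _ => hblock i), Finset.sum_add_distrib,
      Finset.sum_const, Finset.card_range]
    simp only [nsmul_eq_mul]
    push_cast
    linear_combination ih + hC
lemma my_ceil_pair (b a : ℕ) (hb : 0 < b) (hcop : Nat.Coprime a b) (i : ℕ)
    (hi : 0 < i) (hib : i < b) :
    ⌈(i:ℚ) * (a:ℚ) / (b:ℚ)⌉ + ⌈((b - i : ℕ):ℚ) * (a:ℚ) / (b:ℚ)⌉ = (a:ℤ) + 1 := by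
  have hb0 : (b:ℚ) ≠ 0 := by positivity
  have hnd : ¬ b ∣ i * a := by
    intro hdvd
    have h2 : b ∣ i := (Nat.Coprime.dvd_of_dvd_mul_right hcop.symm) hdvd
    have := Nat.le_of_dvd hi h2
    omega
  have e1 : (i:ℚ) * (a:ℚ) / (b:ℚ) = ((i * a : ℕ):ℚ) / (b:ℚ) := by push_cast; ring
  have e2 : ((b - i : ℕ):ℚ) * (a:ℚ) / (b:ℚ) = -(((i * a : ℕ):ℚ) / (b:ℚ)) + ((a:ℕ):ℚ) := by
    rw [Nat.cast_sub hib.le]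
    push_cast
    field_simp
    ring
  rw [e1, e2, Int.ceil_add_natCast, Int.ceil_neg, my_ceil_eq_floor_add_one _ _ hb hnd]
  ring

lemma my_ceil_shift (b a : ℕ) (hb : 0 < b) (j : ℕ) :
    ⌈((j + b : ℕ):ℚ) * (a:ℚ) / (b:ℚ)⌉ = ⌈(j:ℚ) * (a:ℚ) / (b:ℚ)⌉ + (a:ℤ) := by
  have hb0 : (b:ℚ) ≠ 0 := by positivity
  have h : ((j + b : ℕ):ℚ) * (a:ℚ) / (b:ℚ) = (j:ℚ) * (a:ℚ) / (b:ℚ) + ((a:ℕ):ℚ) := by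
    push_cast
    field_simp
  rw [h, Int.ceil_add_natCast]

lemma my_ceil_sum (b a : ℕ) (hb : 0 < b) (hcop : Nat.Coprime a b) (k : ℕ) :
    2 * ∑ j ∈ range (k * b), ⌈(j:ℚ) * (a:ℚ) / (b:ℚ)⌉
      = (k:ℤ) * (((b:ℤ) - 1) * ((a:ℤ) + 1)) + (b:ℤ) * (a:ℤ) * (k:ℤ) * ((k:ℤ) - 1) :=
  my_sum_blocks (fun j => ⌈(j:ℚ) * (a:ℚ) / (b:ℚ)⌉) b (a:ℤ) _
    (fun j => my_ceil_shift b a hb j)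
    (my_sum_pair _ b hb _ (by simp) (fun i hi hib => my_ceil_pair b a hb hcop i hi hib)) k

lemma my_floor_small (N i : ℕ) (h : i < N) : ⌊(i:ℚ) / (N:ℚ)⌋ = 0 := by
  have hN : 0 < N := by omega
  rw [Int.floor_eq_zero_iff]
  constructor
  · positivity
  · rw [div_lt_one (by positivity)]
    exact_mod_cast h

lemma my_floor_shift (N : ℕ) (hN : 0 < N) (j : ℕ) :
    ⌊((j + N : ℕ):ℚ) / (N:ℚ)⌋ = ⌊(j:ℚ) / (N:ℚ)⌋ + 1 := by
  have hN0 : (N:ℚ) ≠ 0 := by positivity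
  have h : ((j + N : ℕ):ℚ) / (N:ℚ) = (j:ℚ) / (N:ℚ) + 1 := by
    push_cast
    field_simp
  rw [h, Int.floor_add_one]

lemma my_floor_sum (N : ℕ) (hN : 0 < N) (k r : ℕ) (hr : r ≤ N) :
    2 * ∑ j ∈ range (k * N + r), ⌊(j:ℚ) / (N:ℚ)⌋
      = (N:ℤ) * (k:ℤ) * ((k:ℤ) - 1) + 2 * (k:ℤ) * (r:ℤ) := by
  rw [Finset.sum_range_add]
  have hC : 2 * ∑ j ∈ range N, ⌊(j:ℚ) / (N:ℚ)⌋ = 0 := by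
    rw [Finset.sum_congr rfl (fun i hi => my_floor_small N i (Finset.mem_range.mp hi))]
    simp
  have hblocks := my_sum_blocks (fun j => ⌊(j:ℚ) / (N:ℚ)⌋) N 1 0
    (fun j => my_floor_shift N hN j) hC k
  have hpt : ∀ i ∈ range r, ⌊((k * N + i : ℕ):ℚ) / (N:ℚ)⌋ = (k:ℤ) := by
    intro i hi
    simp only [Finset.mem_range] at hi
    have h1 : k * N + i = i + k * N := by ring
    rw [h1, my_shift_iter (fun j => ⌊(j:ℚ) / (N:ℚ)⌋) N 1 (fun j => my_floor_shift N hN j) k i,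
      my_floor_small N i (by omega)]
    ring
  have hpartial : ∑ i ∈ range r, ⌊((k * N + i : ℕ):ℚ) / (N:ℚ)⌋ = (r:ℤ) * (k:ℤ) := by
    rw [Finset.sum_congr rfl hpt, Finset.sum_const, Finset.card_range, nsmul_eq_mul]
  rw [hpartial]
  push_cast at hblocks ⊢
  linarith [hblocks]

lemma my_ceil_third (N : ℕ) (hN : 0 < N) (j : ℕ) :
    ⌈(j:ℚ) * ((N:ℚ) - 1) / (N:ℚ)⌉ = (j:ℤ) - ⌊(j:ℚ) / (N:ℚ)⌋ := by
  have hN0 : (N:ℚ) ≠ 0 := by positivity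
  have h : (j:ℚ) * ((N:ℚ) - 1) / (N:ℚ) = -((j:ℚ) / (N:ℚ)) + ((j:ℕ):ℚ) := by
    field_simp
    ring
  rw [h, Int.ceil_add_natCast, Int.ceil_neg]
  ring

lemma my_gauss (m : ℕ) : 2 * ∑ j ∈ range m, (j:ℤ) = (m:ℤ) * ((m:ℤ) - 1) := by
  induction m with
  | zero => simp
  | succ m ih =>
    rw [Finset.sum_range_succ]
    push_cast
    linear_combination ih

end MyHelpers

set_option maxHeartbeats 1000000 in
open Finset in
/-- for `0 ≤ n ≤ 2δ−3` one has `τ(npq) = n(n−2δ+3)/2` and `Δ_{npq} = 1`. -/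
theorem torusTau_at_npq (p q : ℕ) (hp : 2 ≤ p) (hpq : p < q) (hcop : Nat.Coprime p q)
    (δ : ℕ) (hδ : 2 * δ = (p - 1) * (q - 1))
    (p' : ℕ) (hp'pos : 0 < p') (hp'lt : p' < p) (hp' : p' * q ≡ 1 [MOD p])
    (q' : ℕ) (hq'pos : 0 < q') (hq'lt : q' < q) (hq' : p * q' ≡ 1 [MOD q])
    (n : ℕ) (hn : (n : ℤ) ≤ 2 * (δ : ℤ) - 3) :
    (torusTau p q p' q' (n * p * q) : ℚ) = (n : ℚ) * ((n : ℚ) - 2 * (δ : ℚ) + 3) / 2 ∧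
      torusDelta p q p' q' (n * p * q) = 1 := by
  have hq3 : 3 ≤ q := by omega
  have hp1 : 1 ≤ p' * q := Nat.one_le_iff_ne_zero.mpr (by positivity)
  have hq1 : 1 ≤ p * q' := Nat.one_le_iff_ne_zero.mpr (by positivity)
  have hdp : p ∣ p' * q - 1 := (Nat.modEq_iff_dvd' hp1).mp hp'.symm
  have hdq : q ∣ p * q' - 1 := (Nat.modEq_iff_dvd' hq1).mp hq'.symm
  -- coprimality
  have hcp' : Nat.Coprime p' p := by
    have d1 : Nat.gcd p' p ∣ p' * q := Dvd.dvd.mul_right (Nat.gcd_dvd_left p' p) q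
    have d2 : Nat.gcd p' p ∣ p' * q - 1 := (Nat.gcd_dvd_right p' p).trans hdp
    have d3 := Nat.dvd_sub d1 d2
    rw [show p' * q - (p' * q - 1) = 1 by omega] at d3
    exact Nat.dvd_one.mp d3
  have hcq' : Nat.Coprime q' q := by
    have d1 : Nat.gcd q' q ∣ p * q' := Dvd.dvd.mul_left (Nat.gcd_dvd_left q' q) p
    have d2 : Nat.gcd q' q ∣ p * q' - 1 := (Nat.gcd_dvd_right q' q).trans hdq
    have d3 := Nat.dvd_sub d1 d2
    rw [show p * q' - (p * q' - 1) = 1 by omega] at d3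
    exact Nat.dvd_one.mp d3
  -- the key identity q·p' + p·q' = pq + 1
  have hdpZ : (p:ℤ) ∣ ((q:ℤ) * (p':ℤ) + (p:ℤ) * (q':ℤ) - 1) := by
    obtain ⟨c, hc⟩ := hdp
    have hcZ : (p':ℤ) * (q:ℤ) - 1 = (p:ℤ) * c := by zify [hp1] at hc; exact_mod_cast hc
    exact ⟨c + q', by linear_combination hcZ⟩
  have hdqZ : (q:ℤ) ∣ ((q:ℤ) * (p':ℤ) + (p:ℤ) * (q':ℤ) - 1) := by
    obtain ⟨c, hc⟩ := hdq
    have hcZ : (p:ℤ) * (q':ℤ) - 1 = (q:ℤ) * c := by zify [hq1] at hc; exact_mod_cast hc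
    exact ⟨c + p', by linear_combination hcZ⟩
  obtain ⟨k, hk⟩ := (Nat.isCoprime_iff_coprime.mpr hcop).mul_dvd hdpZ hdqZ
  have hpZ : (2:ℤ) ≤ (p:ℤ) := by exact_mod_cast hp
  have hqZ : (3:ℤ) ≤ (q:ℤ) := by exact_mod_cast hq3
  have hp'Z1 : (1:ℤ) ≤ (p':ℤ) := by exact_mod_cast hp'pos
  have hp'Z2 : (p':ℤ) ≤ (p:ℤ) - 1 := by
    have : (p':ℤ) < (p:ℤ) := by exact_mod_cast hp'lt
    omega
  have hq'Z1 : (1:ℤ) ≤ (q':ℤ) := by exact_mod_cast hq'pos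
  have hq'Z2 : (q':ℤ) ≤ (q:ℤ) - 1 := by
    have : (q':ℤ) < (q:ℤ) := by exact_mod_cast hq'lt
    omega
  have e1 : (q:ℤ) * 1 ≤ (q:ℤ) * (p':ℤ) := mul_le_mul_of_nonneg_left hp'Z1 (by linarith)
  have e2 : (p:ℤ) * 1 ≤ (p:ℤ) * (q':ℤ) := mul_le_mul_of_nonneg_left hq'Z1 (by linarith)
  have e3 : (q:ℤ) * (p':ℤ) ≤ (q:ℤ) * ((p:ℤ) - 1) := mul_le_mul_of_nonneg_left hp'Z2 (by linarith)
  have e4 : (p:ℤ) * (q':ℤ) ≤ (p:ℤ) * ((q:ℤ) - 1) := mul_le_mul_of_nonneg_left hq'Z2 (by linarith)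
  have hkey : (q:ℤ) * (p':ℤ) + (p:ℤ) * (q':ℤ) = (p:ℤ) * (q:ℤ) + 1 := by
    have hk1 : 1 ≤ k := by
      by_contra h
      push_neg at h
      have h0 : (p:ℤ) * (q:ℤ) * k ≤ 0 :=
        mul_nonpos_of_nonneg_of_nonpos (by positivity) (by omega)
      nlinarith
    have hk2 : k ≤ 1 := by
      by_contra h
      push_neg at h
      have h2 : (p:ℤ) * (q:ℤ) * 2 ≤ (p:ℤ) * (q:ℤ) * k :=
        mul_le_mul_of_nonneg_left (by omega) (by positivity)
      nlinarith
    have : k = 1 := le_antisymm hk2 hk1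
    subst this
    linear_combination hk
  -- δ in ℤ
  have hδZ : 2 * (δ:ℤ) = ((p:ℤ) - 1) * ((q:ℤ) - 1) := by
    have h1 : 1 ≤ p := by omega
    have h2 : 1 ≤ q := by omega
    zify [h1, h2] at hδ
    exact_mod_cast hδ
  -- N = pq - 1
  set N : ℕ := p * q - 1 with hNdef
  have hpq1 : 1 ≤ p * q := Nat.one_le_iff_ne_zero.mpr (by positivity)
  have hN : 0 < N := by omega
  have hNZ : (N:ℤ) = (p:ℤ) * (q:ℤ) - 1 := by
    rw [hNdef]
    push_cast [Nat.cast_sub hpq1]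
    ring
  have hNQ : (p:ℚ) * (q:ℚ) - 1 = (N:ℚ) := by
    have : ((N:ℤ) : ℚ) = (((p:ℤ) * (q:ℤ) - 1 : ℤ) : ℚ) := by exact_mod_cast hNZ
    push_cast at this
    linarith
  have hN2 : (p:ℚ) * (q:ℚ) - 2 = (N:ℚ) - 1 := by linarith [hNQ]
  -- n < N
  have hnN : n < N := by
    have hexp : ((p:ℤ) - 1) * ((q:ℤ) - 1) = (p:ℤ) * (q:ℤ) - (p:ℤ) - (q:ℤ) + 1 := by ring
    have h1 : (n:ℤ) < (N:ℤ) := by rw [hNZ]; linarith [hn, hδZ, hexp, hpZ, hqZ]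
    exact_mod_cast h1
  set m : ℕ := n * p * q with hm
  have hmZ : (m:ℤ) = (n:ℤ) * (p:ℤ) * (q:ℤ) := by rw [hm]; push_cast; ring
  have hmN : m = n + n * N := by
    obtain ⟨t, ht⟩ : ∃ t, p * q = t + 1 := ⟨p * q - 1, by omega⟩
    have hNt : N = t := by omega
    rw [hm, hNt, mul_assoc, ht]
    ring
  constructor
  · -- the τ formula
    have h2tau : 2 * torusTau p q p' q' m = (n:ℤ) * ((n:ℤ) - 2 * (δ:ℤ) + 3) := by
      unfold torusTau torusDelta
      rw [Finset.sum_sub_distrib, Finset.sum_sub_distrib, Finset.sum_sub_distrib]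
      have h3 : ∀ j ∈ Finset.range m,
          ⌈((j:ℚ) * ((p:ℚ) * (q:ℚ) - 2)) / ((p:ℚ) * (q:ℚ) - 1)⌉
            = (j:ℤ) - ⌊(j:ℚ) / (N:ℚ)⌋ := by
        intro j _
        rw [hN2, hNQ]
        exact my_ceil_third N hN j
      rw [Finset.sum_congr rfl h3, Finset.sum_sub_distrib]
      have hT0 : 2 * ∑ j ∈ Finset.range m, (1 + 2 * (j:ℤ))
          = 2 * (m:ℤ) + 2 * ((m:ℤ) * ((m:ℤ) - 1)) := by
        rw [Finset.sum_add_distrib, Finset.sum_const, Finset.card_range, nsmul_eq_mul,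
          mul_one, ← Finset.mul_sum]
        linear_combination 2 * my_gauss m
      have hS1 : 2 * ∑ j ∈ Finset.range m, ⌈((j:ℚ) * (p':ℚ)) / (p:ℚ)⌉
          = ((n:ℤ) * (q:ℤ)) * (((p:ℤ) - 1) * ((p':ℤ) + 1))
            + (p:ℤ) * (p':ℤ) * ((n:ℤ) * (q:ℤ)) * ((n:ℤ) * (q:ℤ) - 1) := by
        rw [show m = (n * q) * p by rw [hm]; ring]
        have := my_ceil_sum p p' (by omega) hcp' (n * q)
        push_cast at this ⊢
        linarith [this]
      have hS2 : 2 * ∑ j ∈ Finset.range m, ⌈((j:ℚ) * (q':ℚ)) / (q:ℚ)⌉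
          = ((n:ℤ) * (p:ℤ)) * (((q:ℤ) - 1) * ((q':ℤ) + 1))
            + (q:ℤ) * (q':ℤ) * ((n:ℤ) * (p:ℤ)) * ((n:ℤ) * (p:ℤ) - 1) := by
        rw [hm]
        have := my_ceil_sum q q' (by omega) hcq' (n * p)
        push_cast at this ⊢
        linarith [this]
      have hSF : 2 * ∑ j ∈ Finset.range m, ⌊(j:ℚ) / (N:ℚ)⌋
          = (N:ℤ) * (n:ℤ) * ((n:ℤ) - 1) + 2 * (n:ℤ) * (n:ℤ) := by
        rw [show m = n * N + n by rw [hmN]; ring]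
        exact my_floor_sum N hN n n hnN.le
      have hg := my_gauss m
      rw [hNZ] at hSF
      linear_combination hT0 - hS1 - hS2 - hg + hSF
        - ((n:ℤ) * ((n:ℤ) * (p:ℤ) * (q:ℤ) - 1)) * hkey - (n:ℤ) * hδZ
        + (2 * (m:ℤ) + 2 * ((n:ℤ) * (p:ℤ) * (q:ℤ)) - 1) * hmZ
        + (2 - (m:ℤ) - (n:ℤ) * (p:ℤ) * (q:ℤ)) * hmZ + 2 * (n:ℤ) * hδZ
    have hQ := congrArg (fun z : ℤ => (z:ℚ)) h2tau
    push_cast at hQ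
    rw [eq_div_iff (by norm_num : (2:ℚ) ≠ 0)]
    linarith [hQ]
  · -- Δ at m equals 1
    unfold torusDelta
    have c1 : ⌈((m:ℚ) * (p':ℚ)) / (p:ℚ)⌉ = ((n * q * p' : ℕ) : ℤ) := by
      have e : ((m:ℚ) * (p':ℚ)) / (p:ℚ) = ((n * q * p' : ℕ) : ℚ) := by
        rw [hm]
        have hp0 : (p:ℚ) ≠ 0 := by positivity
        push_cast
        field_simp
      rw [e, Int.ceil_natCast]
    have c2 : ⌈((m:ℚ) * (q':ℚ)) / (q:ℚ)⌉ = ((n * p * q' : ℕ) : ℤ) := by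
      have e : ((m:ℚ) * (q':ℚ)) / (q:ℚ) = ((n * p * q' : ℕ) : ℚ) := by
        rw [hm]
        have hq0 : (q:ℚ) ≠ 0 := by positivity
        push_cast
        field_simp
      rw [e, Int.ceil_natCast]
    have c3 : ⌈((m:ℚ) * ((p:ℚ) * (q:ℚ) - 2)) / ((p:ℚ) * (q:ℚ) - 1)⌉
        = (m:ℤ) - (n:ℤ) := by
      rw [hN2, hNQ, my_ceil_third N hN m]
      have hfl : ⌊(m:ℚ) / (N:ℚ)⌋ = (n:ℤ) := by
        rw [hmN]
        have := my_shift_iter (fun j => ⌊(j:ℚ) / (N:ℚ)⌋) N 1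
          (fun j => my_floor_shift N hN j) n n
        rw [this, my_floor_small N n hnN]
        ring
      rw [hfl]
    rw [c1, c2, c3]
    push_cast
    rw [hmZ]
    linear_combination (-(n:ℤ)) * hkey
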